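/- Let f be a natural number with f ≥ 1, let B ⊆ Fin (3f+1) be a finite set with |B| ≤ f, and define the leader of view v ∈ ℕ to be v mod (3f+1). Then the set of views v ∈ ℕ such that the leaders of views v, v+1, and v+2 are all outside B is infinite. -/

import Mathlib

/-- The leader of view `v` under round-robin rotation among `3f+1` replicas. -/
def leader (f : ℕ) (v : ℕ) : Fin (3 * f + 1) :=
  ⟨v % (3 * f + 1), Nat.mod_lt _ (by omega)⟩

lemma leader_val_add (f j : ℕ) (i : Fin (3 * f + 1)) :
    leader f (i.val + j) = i + leader f j := by
  apply Fin.ext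
  simp only [leader, Fin.add_def]
  conv_lhs => rw [Nat.add_mod, Nat.mod_eq_of_lt i.isLt]

lemma leader_period (f a k : ℕ) :
    leader f (a + k * (3 * f + 1)) = leader f a := by
  apply Fin.ext
  simp [leader, Nat.add_mul_mod_self_right]

theorem infinitely_many_honest_trios
    (f : ℕ) (hf : 1 ≤ f)
    (B : Finset (Fin (3 * f + 1))) (hB : B.card ≤ f) :
    {v : ℕ | leader f v ∉ B ∧ leader f (v + 1) ∉ B ∧ leader f (v + 2) ∉ B}.Infinite := by
  classical
  set bad : Finset (Fin (3 * f + 1)) := Finset.univ.filter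
    (fun i => leader f i.val ∈ B ∨ leader f (i.val + 1) ∈ B ∨ leader f (i.val + 2) ∈ B)
    with hbad
  have hsub : bad ⊆ B.image (· - leader f 0) ∪ B.image (· - leader f 1)
      ∪ B.image (· - leader f 2) := by
    intro i hi
    simp only [hbad, Finset.mem_filter] at hi
    rcases hi.2 with h | h | h
    · refine Finset.mem_union_left _ (Finset.mem_union_left _
        (Finset.mem_image.2 ⟨leader f (i.val + 0), by simpa using h, ?_⟩))
      rw [leader_val_add]; exact add_sub_cancel_right _ _
    · refine Finset.mem_union_left _ (Finset.mem_union_right _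
        (Finset.mem_image.2 ⟨leader f (i.val + 1), h, ?_⟩))
      rw [leader_val_add]; exact add_sub_cancel_right _ _
    · refine Finset.mem_union_right _
        (Finset.mem_image.2 ⟨leader f (i.val + 2), h, ?_⟩)
      rw [leader_val_add]; exact add_sub_cancel_right _ _
  have hcard : bad.card < 3 * f + 1 := by
    have hs := Finset.card_le_card hsub
    have h1 := Finset.card_union_le (B.image (· - leader f 0) ∪ B.image (· - leader f 1))
      (B.image (· - leader f 2))
    have h2 := Finset.card_union_le (B.image (· - leader f 0)) (B.image (· - leader f 1))
    have i0 := Finset.card_image_le (s := B) (f := (· - leader f 0))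
    have i1 := Finset.card_image_le (s := B) (f := (· - leader f 1))
    have i2 := Finset.card_image_le (s := B) (f := (· - leader f 2))
    omega
  obtain ⟨i, hi⟩ : ∃ i : Fin (3 * f + 1), i ∉ bad := by
    by_contra h
    push_neg at h
    have : bad = Finset.univ := Finset.eq_univ_of_forall h
    rw [this, Finset.card_univ, Fintype.card_fin] at hcard
    omega
  simp only [hbad, Finset.mem_filter, Finset.mem_univ, true_and] at hi
  push_neg at hi
  apply Set.infinite_of_injective_forall_mem (f := fun k : ℕ => i.val + k * (3 * f + 1)) ?_ ?_
  · intro a b hab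
    simp only [add_right_inj] at hab
    exact Nat.eq_of_mul_eq_mul_right (by omega) hab
  · intro k
    refine ⟨?_, ?_, ?_⟩
    · simpa using (leader_period f i.val k) ▸ hi.1
    · have : i.val + k * (3 * f + 1) + 1 = (i.val + 1) + k * (3 * f + 1) := by ring
      rw [this, leader_period]; exact hi.2.1
    · have : i.val + k * (3 * f + 1) + 2 = (i.val + 2) + k * (3 * f + 1) := by ring
      rw [this, leader_period]; exact hi.2.2
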